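/- Let q ≥ 1 and let A be a symmetric K×K real matrix with eigenvalues λ_1, …, λ_K ordered by decreasing absolute value (|λ_1| ≥ … ≥ |λ_K|). Define R_q(A) := Σ_{i_1,…,i_q pairwise distinct} λ_{i_1}²⋯λ_{i_q}² (R_0(A) := 1) and r_j(A) := Σ_{i ≥ j} λ_i². Then: (1) R_{q−1}(A)·r_q(A) ≤ R_q(A) ≤ q·R_{q−1}(A)·r_q(A); (2) ∏_{i=1}^{q} r_i(A) ≤ R_q(A) ≤ q!·∏_{i=1}^{q} r_i(A); (3) r_q(A)^q ≤ R_q(A) ≤ q!·r_1(A)^{q−1}·r_q(A). -/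

import Mathlib

open MeasureTheory ProbabilityTheory MvPolynomial Filter Topology
open scoped ENNReal NNReal

noncomputable def gaussPi (ι : Type) [Fintype ι] : Measure (ι → ℝ) :=
  Measure.pi fun _ => gaussianReal 0 1

noncomputable def hermiteProd {K : ℕ} (k : Fin K → ℕ) : MvPolynomial (Fin K) ℝ :=
  ∏ i, Polynomial.aeval (MvPolynomial.X i) (Polynomial.hermite (k i))

noncomputable def chaos (K m : ℕ) : Submodule ℝ (MvPolynomial (Fin K) ℝ) :=
  Submodule.span ℝ {P | ∃ k : Fin K → ℕ, ∑ i, k i = m ∧ P = hermiteProd k}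

noncomputable def sqField {ι : Type} [Fintype ι] (P : MvPolynomial ι ℝ) (x : ι → ℝ) : ℝ :=
  ∑ i, (eval x (pderiv i P)) ^ 2

def TendstoInLaw {E : Type} [MeasurableSpace E] [TopologicalSpace E]
    (μs : ℕ → Measure E) (μ : Measure E) : Prop :=
  ∀ f : BoundedContinuousFunction E ℝ,
    Tendsto (fun n => ∫ x, f x ∂μs n) atTop (𝓝 (∫ x, f x ∂μ))

/-- `R_q` built from a list of eigenvalues:
`R_q(λ) = ∑_{i₁,…,i_q pairwise distinct} λ_{i₁}² ⋯ λ_{i_q}²` (so `R_0 = 1`). -/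
noncomputable def specRemOf {K : ℕ} (lam : Fin K → ℝ) (q : ℕ) : ℝ :=
  ∑ f : Fin q ↪ Fin K, ∏ j, (lam (f j)) ^ 2

/-- `r_j(λ) = ∑_{i ≥ j} λ_i²` for the eigenvalues listed in decreasing order of absolute value
(`1`-based indexing, so `r_1` is the full sum). -/
noncomputable def specTailOf {K : ℕ} (lam : Fin K → ℝ) (j : ℕ) : ℝ :=
  ∑ i ∈ Finset.univ.filter (fun i : Fin K => j ≤ (i : ℕ) + 1), (lam i) ^ 2



namespace SpecAux

variable {K : ℕ}

noncomputable def Rfun (μ : Fin K → ℝ) (q : ℕ) : ℝ :=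
  ∑ f ∈ Finset.univ.filter (fun f : Fin q → Fin K => Function.Injective f), ∏ j, μ (f j)

noncomputable def tl (μ : Fin K → ℝ) (m : ℕ) : ℝ :=
  ∑ i ∈ Finset.univ.filter (fun i : Fin K => m ≤ (i : ℕ)), μ i

variable {μ : Fin K → ℝ} (h0 : ∀ i, 0 ≤ μ i)
  (hmono : ∀ i j : Fin K, i ≤ j → μ j ≤ μ i)

include h0

lemma tl_nonneg (m : ℕ) : 0 ≤ tl μ m :=
  Finset.sum_nonneg fun i _ => h0 i

lemma Rfun_nonneg (q : ℕ) : 0 ≤ Rfun μ q :=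
  Finset.sum_nonneg fun f _ => Finset.prod_nonneg fun j _ => h0 _

lemma tl_anti {m m' : ℕ} (h : m ≤ m') : tl μ m' ≤ tl μ m := by
  apply Finset.sum_le_sum_of_subset_of_nonneg
  · intro i hi
    simp only [Finset.mem_filter, Finset.mem_univ, true_and] at hi ⊢
    omega
  · intro i _ _; exact h0 i

omit h0

lemma Rfun_zero (μ : Fin K → ℝ) : Rfun μ 0 = 1 := by
  have h : (Finset.univ.filter (fun f : Fin 0 → Fin K => Function.Injective f)) = Finset.univ := by
    apply Finset.filter_true_of_mem
    intro f _
    exact Function.injective_of_subsingleton f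
  rw [Rfun, h]
  simp [Finset.sum_const]

lemma sum_le_sum_of_card_le {ι : Type*} {u v : Finset ι} {f : ι → ℝ}
    (hv0 : ∀ y ∈ v, 0 ≤ f y) (hcard : u.card ≤ v.card)
    (hle : ∀ x ∈ u, ∀ y ∈ v, f x ≤ f y) : ∑ x ∈ u, f x ≤ ∑ y ∈ v, f y := by
  rcases u.eq_empty_or_nonempty with rfl | hu
  · simpa using Finset.sum_nonneg hv0
  · have hv : v.Nonempty := Finset.card_pos.mp (lt_of_lt_of_le (Finset.card_pos.mpr hu) hcard)
    obtain ⟨y₀, hy₀v, hy₀⟩ := v.exists_min_image f hv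
    calc ∑ x ∈ u, f x ≤ ∑ _x ∈ u, f y₀ := Finset.sum_le_sum fun x hx => hle x hx y₀ hy₀v
    _ = u.card * f y₀ := by rw [Finset.sum_const, nsmul_eq_mul]
    _ ≤ v.card * f y₀ := by
        apply mul_le_mul_of_nonneg_right _ (hv0 y₀ hy₀v)
        exact_mod_cast hcard
    _ = ∑ _y ∈ v, f y₀ := by rw [Finset.sum_const, nsmul_eq_mul]
    _ ≤ ∑ y ∈ v, f y := Finset.sum_le_sum fun y hy => hy₀ y hy

lemma card_filter_coe_lt {m : ℕ} (h : m ≤ K) :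
    (Finset.univ.filter (fun i : Fin K => (i : ℕ) < m)).card = m := by
  have := Finset.card_bij' (s := Finset.univ.filter (fun i : Fin K => (i : ℕ) < m))
    (t := (Finset.univ : Finset (Fin m)))
    (fun (i : Fin K) hi => (⟨(i : ℕ), by simpa using hi⟩ : Fin m))
    (fun (j : Fin m) _ => (⟨(j : ℕ), lt_of_lt_of_le j.isLt h⟩ : Fin K))
    (by intro a ha; simp) (by intro a ha; simp [a.isLt])
    (by intro a ha; rfl) (by intro a ha; rfl)
  simpa using this

include h0 hmono in
lemma top_sum {m : ℕ} {s : Finset (Fin K)} (hs : s.card ≤ m) :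
    ∑ x ∈ s, μ x ≤ ∑ i ∈ Finset.univ.filter (fun i : Fin K => (i : ℕ) < m), μ i := by
  set t := Finset.univ.filter (fun i : Fin K => (i : ℕ) < m) with ht
  by_cases hmK : m ≤ K
  · have hts : t.card = m := card_filter_coe_lt hmK
    have key : ∑ x ∈ s \ t, μ x ≤ ∑ y ∈ t \ s, μ y := by
      apply sum_le_sum_of_card_le (fun y _ => h0 y)
      · have h3 := Finset.card_sdiff_add_card_inter s t
        have h4 := Finset.card_sdiff_add_card_inter t s
        have h5 : (s ∩ t).card = (t ∩ s).card := by rw [Finset.inter_comm]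
        omega
      · intro x hx y hy
        simp only [ht, Finset.mem_sdiff, Finset.mem_filter, Finset.mem_univ, true_and] at hx hy
        have : (y : ℕ) ≤ (x : ℕ) := by omega
        exact hmono y x this
    calc ∑ x ∈ s, μ x = ∑ x ∈ s ∩ t, μ x + ∑ x ∈ s \ t, μ x :=
          (Finset.sum_inter_add_sum_sdiff s t μ).symm
    _ ≤ ∑ x ∈ t ∩ s, μ x + ∑ y ∈ t \ s, μ y := by
        rw [Finset.inter_comm]; exact add_le_add (le_refl _) key
    _ = ∑ i ∈ t, μ i := Finset.sum_inter_add_sum_sdiff t s μ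
  · have hsub : s ⊆ t := by
      intro x hx
      simp only [ht, Finset.mem_filter, Finset.mem_univ, true_and]
      exact lt_of_lt_of_le x.isLt (le_of_not_ge hmK)
    exact Finset.sum_le_sum_of_subset_of_nonneg hsub fun i _ _ => h0 i

include h0 hmono in
lemma compl_sum {m : ℕ} {s : Finset (Fin K)} (hs : s.card ≤ m) :
    tl μ m ≤ ∑ x ∈ sᶜ, μ x := by
  have hsplit : ∑ x ∈ sᶜ, μ x + ∑ x ∈ s, μ x = ∑ x, μ x := Finset.sum_compl_add_sum s μ
  have hnot : Finset.univ.filter (fun i : Fin K => ¬ m ≤ (i : ℕ)) =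
      Finset.univ.filter (fun i : Fin K => (i : ℕ) < m) := by
    apply Finset.filter_congr; intro i _; simp [Nat.not_le]
  have htot : tl μ m + ∑ i ∈ Finset.univ.filter (fun i : Fin K => (i : ℕ) < m), μ i
      = ∑ x, μ x := by
    rw [tl, ← hnot]
    exact Finset.sum_filter_add_sum_filter_not Finset.univ _ μ
  have hts := top_sum h0 hmono hs
  linarith

lemma Rfun_succ (μ : Fin K → ℝ) (q : ℕ) :
    Rfun μ (q + 1) = ∑ g ∈ Finset.univ.filter (fun g : Fin q → Fin K => Function.Injective g),
      (∏ j, μ (g j)) * ∑ x ∈ (Finset.image g Finset.univ)ᶜ, μ x := by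
  rw [Rfun, Finset.sum_filter,
    ← Equiv.sum_comp (Fin.consEquiv (fun _ : Fin (q + 1) => Fin K))
      (fun f : Fin (q + 1) → Fin K => if Function.Injective f then ∏ j, μ (f j) else 0),
    Fintype.sum_prod_type, Finset.sum_comm, Finset.sum_filter]
  apply Finset.sum_congr rfl
  intro g _
  by_cases hg : Function.Injective g
  · have key : ∀ x : Fin K,
        (if Function.Injective (Fin.consEquiv (fun _ : Fin (q + 1) => Fin K) (x, g))
          then ∏ j, μ ((Fin.consEquiv (fun _ : Fin (q + 1) => Fin K) (x, g)) j) else 0)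
        = if x ∈ (Finset.image g Finset.univ)ᶜ then μ x * ∏ j, μ (g j) else 0 := by
      intro x
      have hc : (Fin.consEquiv (fun _ : Fin (q + 1) => Fin K) (x, g))
          = (Fin.cons x g : Fin (q + 1) → Fin K) := rfl
      rw [hc]
      have hmem : x ∈ (Finset.image g Finset.univ)ᶜ ↔ x ∉ Set.range g := by
        simp [Set.mem_range, eq_comm]
      have hinj : Function.Injective (Fin.cons x g : Fin (q + 1) → Fin K) ↔
          x ∉ Set.range g := by
        rw [Fin.cons_injective_iff]
        exact ⟨fun h => h.1, fun h => ⟨h, hg⟩⟩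
      have hprod : ∏ j, μ ((Fin.cons x g : Fin (q + 1) → Fin K) j) = μ x * ∏ j, μ (g j) := by
        rw [Fin.prod_univ_succ]
        simp
      rw [hprod]
      simp only [hinj, hmem]
    rw [if_pos hg]
    calc ∑ x, (if Function.Injective (Fin.consEquiv (fun _ : Fin (q + 1) => Fin K) (x, g))
          then ∏ j, μ ((Fin.consEquiv (fun _ : Fin (q + 1) => Fin K) (x, g)) j) else 0)
        = ∑ x, if x ∈ (Finset.image g Finset.univ)ᶜ then μ x * ∏ j, μ (g j) else 0 :=
          Finset.sum_congr rfl fun x _ => key x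
      _ = ∑ x ∈ (Finset.image g Finset.univ)ᶜ, μ x * ∏ j, μ (g j) := by
          rw [Finset.sum_ite_mem, Finset.univ_inter]
      _ = (∏ j, μ (g j)) * ∑ x ∈ (Finset.image g Finset.univ)ᶜ, μ x := by
          rw [← Finset.sum_mul, mul_comm]
  · rw [if_neg hg]
    apply Finset.sum_eq_zero
    intro x _
    apply if_neg
    intro hcons
    exact hg (Fin.cons_injective_iff.mp hcons).2

include h0 hmono in
lemma Rfun_step_lower (q : ℕ) : Rfun μ q * tl μ q ≤ Rfun μ (q + 1) := by
  rw [Rfun_succ, Rfun, Finset.sum_mul]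
  apply Finset.sum_le_sum
  intro g _
  apply mul_le_mul_of_nonneg_left _ (Finset.prod_nonneg fun j _ => h0 _)
  apply compl_sum h0 hmono
  calc (Finset.image g Finset.univ).card ≤ (Finset.univ : Finset (Fin q)).card :=
        Finset.card_image_le
  _ = q := by simp

lemma exists_coord_ge (q : ℕ) {f : Fin (q + 1) → Fin K} (hf : Function.Injective f) :
    ∃ j, q ≤ (f j : ℕ) := by
  by_contra h
  push_neg at h
  have hmap : ∀ j ∈ (Finset.univ : Finset (Fin (q + 1))),
      f j ∈ Finset.univ.filter (fun i : Fin K => (i : ℕ) < q) := by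
    intro j _; simp [h j]
  have hle := Finset.card_le_card_of_injOn f hmap hf.injOn
  have hcard : (Finset.univ.filter (fun i : Fin K => (i : ℕ) < q)).card ≤ q := by
    by_cases hqK : q ≤ K
    · exact (card_filter_coe_lt hqK).le
    · calc (Finset.univ.filter (fun i : Fin K => (i : ℕ) < q)).card
          ≤ (Finset.univ : Finset (Fin K)).card := Finset.card_filter_le _ _
      _ = K := by simp
      _ ≤ q := le_of_not_ge hqK
  rw [Finset.card_univ, Fintype.card_fin] at hle
  omega

include h0 hmono in
lemma Rfun_step_upper (q : ℕ) :
    Rfun μ (q + 1) ≤ ((q : ℝ) + 1) * (Rfun μ q * tl μ q) := by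
  have step1 : Rfun μ (q + 1) ≤ ∑ _j : Fin (q + 1), tl μ q * Rfun μ q := by
    have step2 : ∀ j : Fin (q + 1),
        (∑ f ∈ Finset.univ.filter
          (fun f : Fin (q + 1) → Fin K => Function.Injective f ∧ q ≤ (f j : ℕ)),
            ∏ i, μ (f i)) ≤ tl μ q * Rfun μ q := by
      intro j
      set A := Finset.univ.filter
        (fun f : Fin (q + 1) → Fin K => Function.Injective f ∧ q ≤ (f j : ℕ)) with hA
      set Φ : (Fin (q + 1) → Fin K) → (Fin K × (Fin q → Fin K)) :=
        fun f => (f j, fun i => f (j.succAbove i)) with hΦ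
      have hΦinj : ∀ f ∈ A, ∀ f' ∈ A, Φ f = Φ f' → f = f' := by
        intro f _ f' _ h
        have h1 : f j = f' j := congrArg Prod.fst h
        have h2 : (fun i => f (j.succAbove i)) = fun i => f' (j.succAbove i) :=
          congrArg Prod.snd h
        calc f = Fin.insertNth j (f j) (j.removeNth f) :=
              (Fin.insertNth_self_removeNth j f).symm
        _ = Fin.insertNth j (f' j) (j.removeNth f') := by
            rw [h1]
            have hr : j.removeNth f = j.removeNth f' := by
              funext i; exact congrFun h2 i
            rw [hr]
        _ = f' := Fin.insertNth_self_removeNth j f'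
      calc (∑ f ∈ A, ∏ i, μ (f i))
          = ∑ f ∈ A, μ (f j) * ∏ i, μ (f (j.succAbove i)) :=
            Finset.sum_congr rfl fun f _ =>
              Fin.prod_univ_succAbove (fun i => μ (f i)) j
      _ = ∑ p ∈ A.image Φ, μ p.1 * ∏ i, μ (p.2 i) := by
            rw [Finset.sum_image hΦinj]
      _ ≤ ∑ p ∈ (Finset.univ.filter (fun x : Fin K => q ≤ (x : ℕ))) ×ˢ
            (Finset.univ.filter (fun g : Fin q → Fin K => Function.Injective g)),
            μ p.1 * ∏ i, μ (p.2 i) := by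
          apply Finset.sum_le_sum_of_subset_of_nonneg
          · intro p hp
            simp only [Finset.mem_image] at hp
            obtain ⟨f, hf, rfl⟩ := hp
            rw [hA, Finset.mem_filter] at hf
            simp only [Finset.mem_product, Finset.mem_filter, Finset.mem_univ, true_and]
            exact ⟨hf.2.2, hf.2.1.comp Fin.succAbove_right_injective⟩
          · intro p _ _
            exact mul_nonneg (h0 _) (Finset.prod_nonneg fun i _ => h0 _)
      _ = tl μ q * Rfun μ q := by
          rw [Finset.sum_product, tl, Rfun, Finset.sum_mul_sum]
    have step0 : Rfun μ (q + 1) ≤ ∑ j : Fin (q + 1), ∑ f ∈ Finset.univ.filter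
        (fun f : Fin (q + 1) → Fin K => Function.Injective f ∧ q ≤ (f j : ℕ)),
          ∏ i, μ (f i) := by
      rw [Rfun]
      simp only [Finset.sum_filter]
      rw [Finset.sum_comm]
      apply Finset.sum_le_sum
      intro f _
      by_cases hf : Function.Injective f
      · obtain ⟨j₀, hj₀⟩ := exists_coord_ge q hf
        have hsingle : (if Function.Injective f ∧ q ≤ (f j₀ : ℕ) then ∏ i, μ (f i) else 0) ≤
            ∑ x : Fin (q + 1),
              if Function.Injective f ∧ q ≤ (f x : ℕ) then ∏ i, μ (f i) else 0 :=
          Finset.single_le_sum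
            (f := fun j : Fin (q + 1) =>
              if Function.Injective f ∧ q ≤ (f j : ℕ) then ∏ i, μ (f i) else 0)
            (fun j _ => by
              split
              · exact Finset.prod_nonneg fun i _ => h0 _
              · exact le_refl 0)
            (Finset.mem_univ j₀)
        rw [if_pos (show Function.Injective f ∧ q ≤ (f j₀ : ℕ) from ⟨hf, hj₀⟩)] at hsingle
        rw [if_pos hf]
        exact hsingle
      · simp [hf]
    calc Rfun μ (q + 1) ≤ _ := step0
    _ ≤ ∑ _j : Fin (q + 1), tl μ q * Rfun μ q := Finset.sum_le_sum fun j _ => step2 j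
  calc Rfun μ (q + 1) ≤ ∑ _j : Fin (q + 1), tl μ q * Rfun μ q := step1
  _ = ((q : ℝ) + 1) * (Rfun μ q * tl μ q) := by
      rw [Finset.sum_const, Finset.card_univ, Fintype.card_fin, nsmul_eq_mul]
      push_cast
      ring

include h0 hmono in
lemma Rfun_prod_bounds (q : ℕ) :
    (∏ i ∈ Finset.Icc 1 q, tl μ (i - 1)) ≤ Rfun μ q ∧
      Rfun μ q ≤ (q.factorial : ℝ) * ∏ i ∈ Finset.Icc 1 q, tl μ (i - 1) := by
  induction q with
  | zero => simp [Rfun_zero]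
  | succ n ih =>
    have hsplit : (∏ i ∈ Finset.Icc 1 (n + 1), tl μ (i - 1))
        = (∏ i ∈ Finset.Icc 1 n, tl μ (i - 1)) * tl μ n := by
      rw [Finset.prod_Icc_succ_top (Nat.le_add_left 1 n)]
      simp
    have htl := tl_nonneg h0 n
    have hprodnn : 0 ≤ ∏ i ∈ Finset.Icc 1 n, tl μ (i - 1) :=
      Finset.prod_nonneg fun i _ => tl_nonneg h0 _
    constructor
    · calc (∏ i ∈ Finset.Icc 1 (n + 1), tl μ (i - 1))
          = (∏ i ∈ Finset.Icc 1 n, tl μ (i - 1)) * tl μ n := hsplit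
      _ ≤ Rfun μ n * tl μ n := mul_le_mul_of_nonneg_right ih.1 htl
      _ ≤ Rfun μ (n + 1) := Rfun_step_lower h0 hmono n
    · calc Rfun μ (n + 1) ≤ ((n : ℝ) + 1) * (Rfun μ n * tl μ n) := Rfun_step_upper h0 hmono n
      _ ≤ ((n : ℝ) + 1) * ((n.factorial : ℝ) * (∏ i ∈ Finset.Icc 1 n, tl μ (i - 1)) * tl μ n) := by
          apply mul_le_mul_of_nonneg_left _ (by positivity)
          calc Rfun μ n * tl μ n
              ≤ ((n.factorial : ℝ) * ∏ i ∈ Finset.Icc 1 n, tl μ (i - 1)) * tl μ n :=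
                mul_le_mul_of_nonneg_right ih.2 htl
          _ = (n.factorial : ℝ) * (∏ i ∈ Finset.Icc 1 n, tl μ (i - 1)) * tl μ n := by ring
      _ = ((n + 1).factorial : ℝ) * ∏ i ∈ Finset.Icc 1 (n + 1), tl μ (i - 1) := by
          rw [hsplit, Nat.factorial_succ]
          push_cast
          ring

end SpecAux


lemma specRemOf_eq_Rfun {K : ℕ} (lam : Fin K → ℝ) (q : ℕ) :
    specRemOf lam q = SpecAux.Rfun (fun i => lam i ^ 2) q := by
  rw [specRemOf, SpecAux.Rfun,
    ← Equiv.sum_comp (Equiv.subtypeInjectiveEquivEmbedding (Fin q) (Fin K))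
      (fun f : Fin q ↪ Fin K => ∏ j, lam (f j) ^ 2),
    Finset.sum_subtype (p := fun f : Fin q → Fin K => Function.Injective f)
      (Finset.univ.filter (fun f : Fin q → Fin K => Function.Injective f))
      (fun f => by simp) (fun f : Fin q → Fin K => ∏ j, lam (f j) ^ 2)]
  rfl

lemma specTailOf_eq_tl {K : ℕ} (lam : Fin K → ℝ) (j : ℕ) :
    specTailOf lam j = SpecAux.tl (fun i => lam i ^ 2) (j - 1) := by
  rw [specTailOf, SpecAux.tl]
  apply Finset.sum_congr _ (fun _ _ => rfl)
  ext i
  simp only [Finset.mem_filter, Finset.mem_univ, true_and]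
  omega

/-- Comparison between the spectral remainders `R_q(A)` and the distances
`r_j(A)` to matrices of lower rank, for a symmetric matrix `A` with eigenvalues `λ` ordered by
decreasing absolute value:
`R_{q−1} r_q ≤ R_q ≤ q R_{q−1} r_q`, `∏_{i≤q} r_i ≤ R_q ≤ q! ∏_{i≤q} r_i`, and
`r_q^q ≤ R_q ≤ q! r_1^{q−1} r_q`. -/
theorem spectral_remainder_comparisons (q : ℕ) (hq : 1 ≤ q) (K : ℕ)
    (A : Matrix (Fin K) (Fin K) ℝ) (hA : A.IsHermitian) (lam : Fin K → ℝ)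
    (hperm : ∃ σ : Equiv.Perm (Fin K), ∀ i, lam i = hA.eigenvalues (σ i))
    (hsort : ∀ i j : Fin K, i ≤ j → |lam j| ≤ |lam i|) :
    (specRemOf lam (q - 1) * specTailOf lam q ≤ specRemOf lam q ∧
      specRemOf lam q ≤ q * specRemOf lam (q - 1) * specTailOf lam q) ∧
    ((∏ i ∈ Finset.Icc 1 q, specTailOf lam i) ≤ specRemOf lam q ∧
      specRemOf lam q ≤ (q.factorial : ℝ) * ∏ i ∈ Finset.Icc 1 q, specTailOf lam i) ∧
    ((specTailOf lam q) ^ q ≤ specRemOf lam q ∧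
      specRemOf lam q ≤ (q.factorial : ℝ) * (specTailOf lam 1) ^ (q - 1) * specTailOf lam q) := by
  obtain ⟨n, rfl⟩ : ∃ n, q = n + 1 := ⟨q - 1, (Nat.succ_pred_eq_of_pos hq).symm⟩
  clear hq hperm hA A
  set μ : Fin K → ℝ := fun i => lam i ^ 2 with hμ
  have h0 : ∀ i, 0 ≤ μ i := fun i => sq_nonneg _
  have hmono : ∀ i j : Fin K, i ≤ j → μ j ≤ μ i := by
    intro i j hij
    have := hsort i j hij
    calc μ j = |lam j| ^ 2 := (sq_abs _).symm
    _ ≤ |lam i| ^ 2 := pow_le_pow_left₀ (abs_nonneg _) this 2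
    _ = μ i := sq_abs _
  have hR : ∀ m : ℕ, specRemOf lam m = SpecAux.Rfun μ m := fun m => specRemOf_eq_Rfun lam m
  have hT : ∀ m : ℕ, specTailOf lam m = SpecAux.tl μ (m - 1) := fun m => specTailOf_eq_tl lam m
  have hprodbd := SpecAux.Rfun_prod_bounds h0 hmono (n + 1)
  have hprodeq : (∏ i ∈ Finset.Icc 1 (n + 1), specTailOf lam i)
      = ∏ i ∈ Finset.Icc 1 (n + 1), SpecAux.tl μ (i - 1) :=
    Finset.prod_congr rfl fun i _ => hT i
  have htl_n : specTailOf lam (n + 1) = SpecAux.tl μ n := by rw [hT]; norm_num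
  refine ⟨⟨?_, ?_⟩, ⟨?_, ?_⟩, ?_, ?_⟩
  · rw [hR, hR, htl_n]
    simpa using SpecAux.Rfun_step_lower h0 hmono n
  · rw [hR, hR, htl_n]
    have hup := SpecAux.Rfun_step_upper h0 hmono n
    push_cast
    calc SpecAux.Rfun μ (n + 1) ≤ ((n : ℝ) + 1) * (SpecAux.Rfun μ n * SpecAux.tl μ n) := hup
    _ = ((n : ℝ) + 1) * SpecAux.Rfun μ (n + 1 - 1) * SpecAux.tl μ n := by
        norm_num; ring
  · rw [hR, hprodeq]
    exact hprodbd.1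
  · rw [hR, hprodeq]
    exact hprodbd.2
  · rw [hR, htl_n]
    refine le_trans ?_ hprodbd.1
    have hcard : (Finset.Icc 1 (n + 1)).card = n + 1 := by
      rw [Nat.card_Icc]; omega
    calc SpecAux.tl μ n ^ (n + 1) = ∏ _i ∈ Finset.Icc 1 (n + 1), SpecAux.tl μ n := by
          rw [Finset.prod_const, hcard]
    _ ≤ ∏ i ∈ Finset.Icc 1 (n + 1), SpecAux.tl μ (i - 1) := by
        apply Finset.prod_le_prod (fun i _ => SpecAux.tl_nonneg h0 n)
        intro i hi
        apply SpecAux.tl_anti h0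
        simp only [Finset.mem_Icc] at hi
        omega
  · rw [hR, htl_n]
    have h1 : specTailOf lam 1 = SpecAux.tl μ 0 := by rw [hT]
    rw [h1]
    refine le_trans hprodbd.2 ?_
    have hsplit : (∏ i ∈ Finset.Icc 1 (n + 1), SpecAux.tl μ (i - 1))
        = (∏ i ∈ Finset.Icc 1 n, SpecAux.tl μ (i - 1)) * SpecAux.tl μ n := by
      rw [Finset.prod_Icc_succ_top (Nat.le_add_left 1 n)]
      simp
    have hcard : (Finset.Icc 1 n).card = n := by rw [Nat.card_Icc]; omega
    have hbd : (∏ i ∈ Finset.Icc 1 n, SpecAux.tl μ (i - 1)) ≤ SpecAux.tl μ 0 ^ n := by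
      calc (∏ i ∈ Finset.Icc 1 n, SpecAux.tl μ (i - 1))
          ≤ ∏ _i ∈ Finset.Icc 1 n, SpecAux.tl μ 0 := by
            apply Finset.prod_le_prod (fun i _ => SpecAux.tl_nonneg h0 _)
            intro i _
            exact SpecAux.tl_anti h0 (Nat.zero_le _)
      _ = SpecAux.tl μ 0 ^ n := by rw [Finset.prod_const, hcard]
    have hfac : (0 : ℝ) ≤ ((n + 1).factorial : ℝ) := by positivity
    have htln : 0 ≤ SpecAux.tl μ n := SpecAux.tl_nonneg h0 n
    calc ((n + 1).factorial : ℝ) * ∏ i ∈ Finset.Icc 1 (n + 1), SpecAux.tl μ (i - 1)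
        = ((n + 1).factorial : ℝ) *
            ((∏ i ∈ Finset.Icc 1 n, SpecAux.tl μ (i - 1)) * SpecAux.tl μ n) := by rw [hsplit]
    _ ≤ ((n + 1).factorial : ℝ) * (SpecAux.tl μ 0 ^ n * SpecAux.tl μ n) := by
        apply mul_le_mul_of_nonneg_left _ hfac
        exact mul_le_mul_of_nonneg_right hbd htln
    _ = ((n + 1).factorial : ℝ) * SpecAux.tl μ 0 ^ (n + 1 - 1) * SpecAux.tl μ n := by
        norm_num; ring
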